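/- Let g be a real symmetric 3×3 matrix and for each i ∈ {1,2,3} let L_i be the 3×3 matrix with entries (L_i)_{mn} = ε_{imn}. Then γ = 2g − Tr(g)·I₃ is the unique real 3×3 matrix satisfying L_i γ − (L_i γ)ᵀ + 2 g_{im} L_m = 0 for all i ∈ {1,2,3}. -/

import Mathlib

open scoped BigOperators
open Matrix

/-- The Levi-Civita symbol on `{1,2,3}` (totally antisymmetric, `ε₁₂₃ = 1`). -/
noncomputable def eps (i j k : Fin 3) : ℝ :=
  (((j : ℕ) : ℝ) - ((i : ℕ) : ℝ)) * (((k : ℕ) : ℝ) - ((j : ℕ) : ℝ)) *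
    (((k : ℕ) : ℝ) - ((i : ℕ) : ℝ)) / 2

/-- The matrix `L_i` with entries `(L_i)_{mn} = ε_{imn}`. -/
noncomputable def Lmat (i : Fin 3) : Matrix (Fin 3) (Fin 3) ℝ :=
  Matrix.of fun m n => eps i m n

lemma finmk2 (h : 2 < 3) : (⟨2, h⟩ : Fin 3) = 2 := rfl

set_option maxHeartbeats 1000000 in
/-- For a real symmetric 3×3 matrix `g`, the matrix `γ = 2g − Tr(g)·I₃` is the unique real
3×3 matrix satisfying `L_i γ − (L_i γ)ᵀ + 2 g_{im} L_m = 0` for all `i`. -/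
theorem unique_gamma (g : Matrix (Fin 3) (Fin 3) ℝ) (hsym : g.IsSymm) :
    ∀ γ : Matrix (Fin 3) (Fin 3) ℝ,
      (∀ i, Lmat i * γ - (Lmat i * γ)ᵀ + ∑ m, (2 * g i m) • Lmat m = 0) ↔
        γ = 2 • g - g.trace • (1 : Matrix (Fin 3) (Fin 3) ℝ) := by
  intro γ
  have hs : ∀ i j, g j i = g i j := fun i j => by
    have := congrFun (congrFun hsym i) j
    simpa [Matrix.transpose_apply] using this
  constructor
  · intro h
    have e : ∀ i a b : Fin 3,
        (∑ k, Lmat i a k * γ k b) - (∑ k, γ k a * Lmat i b k)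
          + ∑ m, (2 * g i m) * Lmat m a b = 0 := by
      intro i a b
      have := congrFun (congrFun (h i) a) b
      simpa [Matrix.sub_apply, Matrix.add_apply, Matrix.mul_apply,
        Matrix.transpose_apply, Matrix.sum_apply, Matrix.smul_apply,
        smul_eq_mul] using this
    have e1 := e 0 0 1
    have e2 := e 0 0 2
    have e3 := e 0 1 2
    have e4 := e 1 0 1
    have e5 := e 1 0 2
    have e6 := e 1 1 2
    have e7 := e 2 0 1
    have e8 := e 2 0 2
    have e9 := e 2 1 2
    norm_num [Lmat, eps, Fin.sum_univ_three] at e1 e2 e3 e4 e5 e6 e7 e8 e9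
    ext a b
    fin_cases a <;> fin_cases b <;>
      norm_num [Matrix.trace, Matrix.diag, Matrix.one_apply, two_smul,
        Matrix.sub_apply, Matrix.add_apply, Matrix.smul_apply, smul_eq_mul,
        Fin.ext_iff, finmk2, Fin.sum_univ_three] <;>
      linarith [hs 0 1, hs 0 2, hs 1 2, e1, e2, e3, e4, e5, e6, e7, e8, e9]
  · rintro rfl i
    ext a b
    fin_cases i <;> fin_cases a <;> fin_cases b <;>
      norm_num (config := { decide := true }) [Lmat, eps, Matrix.mul_apply, Matrix.trace, Matrix.diag,
        Matrix.one_apply, two_smul, Matrix.sub_apply, Matrix.add_apply,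
        Matrix.smul_apply, smul_eq_mul, finmk2,
        Fin.sum_univ_three, Matrix.sum_apply] <;>
      linarith [hs 0 1, hs 0 2, hs 1 2]
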